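/- For an interval module M over ℝⁿ and its closure module M̄ (the interval module on the topological closure of I_M), the interleaving distance satisfies d_I(M, M̄) = 0; consequently d_I(M,N) = d_I(M̄, N̄) for all interval modules M, N. -/

import Mathlib

open scoped ENNReal NNReal
open Filter
noncomputable section
attribute [local instance] Classical.propDecidable
set_option linter.unusedVariables false

/-- Points of the poset ℝⁿ. The product instance gives the pointwise partial order
and the sup-norm metric. -/
abbrev Pt (n : ℕ) := Fin n → ℝ

/-- The diagonal vector δ⃗ = (δ,...,δ). -/
def diag (n : ℕ) (δ : ℝ) : Pt n := fun _ => δ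

lemma le_add_diag {n : ℕ} (x : Pt n) {δ : ℝ} (hδ : 0 ≤ δ) : x ≤ x + diag n δ :=
  fun _ => le_add_of_nonneg_right hδ

/-- A (p.f.d.-agnostic) persistence module over the poset ℝⁿ with values in
k-vector spaces: a functor from ℝⁿ to Vec. -/
structure PersMod (n : ℕ) (k : Type*) [Field k] where
  V : Pt n → Type*
  [addgrp : ∀ x, AddCommGroup (V x)]
  [mod : ∀ x, Module k (V x)]
  ρ : ∀ {x y : Pt n}, x ≤ y → (V x →ₗ[k] V y)
  ρ_id : ∀ x : Pt n, ρ (le_refl x) = LinearMap.id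
  ρ_comp : ∀ {x y z : Pt n} (h1 : x ≤ y) (h2 : y ≤ z), ρ (h1.trans h2) = (ρ h2).comp (ρ h1)

attribute [instance] PersMod.addgrp PersMod.mod

variable {n : ℕ} {k : Type*} [Field k]

/-- A morphism (natural transformation) of persistence modules. -/
structure PersHom (M N : PersMod n k) where
  app : ∀ x, M.V x →ₗ[k] N.V x
  natural : ∀ {x y : Pt n} (h : x ≤ y), (app y).comp (M.ρ h) = (N.ρ h).comp (app x)

/-- A δ-interleaving between M and N: families φ_x : M_x → N_{x+δ⃗},
ψ_x : N_x → M_{x+δ⃗} satisfying square and triangular commutativity. -/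
def PersMod.Interleaved (M N : PersMod n k) (δ : ℝ≥0) : Prop :=
  ∃ (φ : ∀ x : Pt n, M.V x →ₗ[k] N.V (x + diag n (δ : ℝ)))
    (ψ : ∀ x : Pt n, N.V x →ₗ[k] M.V (x + diag n (δ : ℝ))),
    (∀ {x y : Pt n} (h : x ≤ y),
        (φ y).comp (M.ρ h) = (N.ρ (add_le_add_left h _)).comp (φ x)) ∧
    (∀ {x y : Pt n} (h : x ≤ y),
        (ψ y).comp (N.ρ h) = (M.ρ (add_le_add_left h _)).comp (ψ x)) ∧
    (∀ x : Pt n, M.ρ ((le_add_diag x δ.coe_nonneg).trans (le_add_diag _ δ.coe_nonneg))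
        = (ψ (x + diag n (δ : ℝ))).comp (φ x)) ∧
    (∀ x : Pt n, N.ρ ((le_add_diag x δ.coe_nonneg).trans (le_add_diag _ δ.coe_nonneg))
        = (φ (x + diag n (δ : ℝ))).comp (ψ x))

/-- The interleaving distance (∞ if no interleaving exists). -/
def PersMod.dI (M N : PersMod n k) : ℝ≥0∞ :=
  ⨅ (δ : ℝ≥0) (_ : M.Interleaved N δ), (δ : ℝ≥0∞)

/-- The diagonal shift M_{→d}. -/
def PersMod.dshift (M : PersMod n k) (d : ℝ) : PersMod n k where
  V x := M.V (x + diag n d)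
  ρ h := M.ρ (add_le_add_left h _)
  ρ_id x := M.ρ_id _
  ρ_comp h1 h2 := M.ρ_comp _ _

/-- M is c-trivial: every structure map over a diagonal shift by c is zero. -/
def PersMod.DTrivial (M : PersMod n k) (c : ℝ≥0) : Prop :=
  ∀ x : Pt n, M.ρ (le_add_diag x c.coe_nonneg) = 0

/-- The 1-parameter slice of M along the diagonal line through x. -/
def PersMod.slice (M : PersMod n k) (x : Pt n) : PersMod 1 k where
  V t := M.V (x + diag n (t 0))
  ρ {t t'} h := M.ρ (fun i => add_le_add_right (h 0) (x i))
  ρ_id t := M.ρ_id _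
  ρ_comp h1 h2 := M.ρ_comp _ _

/-- δ* = sup over diagonal lines of the slice interleaving distances. -/
def deltaStar (M N : PersMod n k) : ℝ≥0∞ :=
  ⨆ x : Pt n, (M.slice x).dI (N.slice x)

/-- Finite direct sum of persistence modules. -/
def dirSum {ι : Type} [Fintype ι] (Ms : ι → PersMod n k) : PersMod n k where
  V x := ∀ i, (Ms i).V x
  ρ h := LinearMap.pi (fun i => ((Ms i).ρ h).comp (LinearMap.proj i))
  ρ_id x := by
    apply LinearMap.ext; intro v; funext i
    simp [(Ms i).ρ_id]
  ρ_comp h1 h2 := by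
    apply LinearMap.ext; intro v; funext i
    show ((Ms i).ρ (h1.trans h2)) (v i) = _
    rw [(Ms i).ρ_comp h1 h2]; rfl

/-- Zigzag reachability inside a set: p ≤ p₁ ≥ p₂ ≤ ... with all points in A. -/
def Zigzag (A : Set (Pt n)) : Pt n → Pt n → Prop :=
  Relation.ReflTransGen (fun a b => a ∈ A ∧ b ∈ A ∧ (a ≤ b ∨ b ≤ a))

/-- An interval: nonempty, order-convex, zigzag-connected. -/
def IsPInterval (I : Set (Pt n)) : Prop :=
  I.Nonempty ∧ (∀ p ∈ I, ∀ q ∈ I, ∀ r, p ≤ r → r ≤ q → r ∈ I) ∧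
    ∀ p ∈ I, ∀ q ∈ I, Zigzag I p q

/-- Q is a (zigzag-)connected component of A. -/
def IsComponent (A Q : Set (Pt n)) : Prop :=
  ∃ p ∈ A, Q = {q | Zigzag A p q}

/-- The fibre of the interval module with interval I: k on I, 0 elsewhere,
realised as a submodule of k. -/
def subOf (k : Type*) [Field k] (I : Set (Pt n)) (x : Pt n) : Submodule k k :=
  if x ∈ I then ⊤ else ⊥

/-- The canonical map between fibres: identity within I, zero otherwise. -/
def stepFun (I : Set (Pt n)) (x y : Pt n) :
    ↥(subOf k I x) →ₗ[k] ↥(subOf k I y) where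
  toFun v := ⟨if y ∈ I then (v : k) else 0, by
    by_cases hy : y ∈ I
    · rw [if_pos hy]; show _ ∈ (if y ∈ I then _ else _); rw [if_pos hy]; exact Submodule.mem_top
    · rw [if_neg hy]; exact Submodule.zero_mem _⟩
  map_add' a b := by
    by_cases hy : y ∈ I <;> · apply Subtype.ext; simp [hy]
  map_smul' c a := by
    by_cases hy : y ∈ I <;> · apply Subtype.ext; simp [hy]

/-- The interval module with interval I. -/
def IntervalMod (k : Type*) [Field k] (I : Set (Pt n)) (hI : IsPInterval I) :
    PersMod n k where
  V x := ↥(subOf k I x)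
  ρ {x y} _ := stepFun I x y
  ρ_id x := by
    apply LinearMap.ext; intro v
    apply Subtype.ext
    by_cases hx : x ∈ I
    · simp [stepFun, hx]
    · have hv : (v : k) = 0 := by
        have h2 := v.2; change _ ∈ (if x ∈ I then _ else _) at h2; rw [if_neg hx] at h2
        exact (Submodule.mem_bot k).1 h2
      simp [stepFun, hx, hv]
  ρ_comp {x y z} h1 h2 := by
    apply LinearMap.ext; intro v
    apply Subtype.ext
    by_cases hz : z ∈ I
    · by_cases hy : y ∈ I
      · simp [stepFun, hy, hz]
      · have hx : x ∉ I := fun hx => hy (hI.2.1 x hx z hz y h1 h2)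
        have hv : (v : k) = 0 := by
          have h2 := v.2; change _ ∈ (if x ∈ I then _ else _) at h2; rw [if_neg hx] at h2
          exact (Submodule.mem_bot k).1 h2
        simp [stepFun, hy, hz, hv]
    · simp [stepFun, hz]

/-- Lower boundary L(I). -/
def lowerBd (I : Set (Pt n)) : Set (Pt n) :=
  {x | x ∈ closure I ∧ ∀ y : Pt n, (∀ i, y i < x i) → y ∉ I}

/-- Upper boundary U(I). -/
def upperBd (I : Set (Pt n)) : Set (Pt n) :=
  {x | x ∈ closure I ∧ ∀ y : Pt n, (∀ i, x i < y i) → y ∉ I}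

/-- Diagonal distance dl(x, A): the infimum of sup-norm distances from x to
points of A along the diagonal line Δ_x, ∞ when Δ_x ∩ A = ∅. -/
def dl (x : Pt n) (A : Set (Pt n)) : ℝ≥0∞ :=
  ⨅ (α : ℝ) (_ : x + diag n α ∈ A), ENNReal.ofReal |α|

/-- d_triv^{(M,N)}(x) = max(dl(x,U(I_M))/2, dl(x,L(I_N))/2). -/
def dtriv (IM IN : Set (Pt n)) (x : Pt n) : ℝ≥0∞ :=
  max (dl x (upperBd IM) / 2) (dl x (lowerBd IN) / 2)

/-- An intersection component with interval Q is δ_{(M,N)}-trivializable. -/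
def Trivializable (IM IN Q : Set (Pt n)) (δ : ℝ≥0∞) : Prop :=
  ∀ x ∈ Q, dtriv IM IN x < δ

/-- (M,N)-validity of an intersection component with interval Q. -/
def MNValid (IM IN Q : Set (Pt n)) : Prop :=
  ∀ x ∈ Q, (∀ y : Pt n, y ≤ x → y ∈ IM → y ∈ IN) ∧
    (∀ z : Pt n, x ≤ z → z ∈ IN → z ∈ IM)

/-- The interval of the shifted module N_{→d}. -/
def shiftSet (I : Set (Pt n)) (d : ℝ) : Set (Pt n) := {x | x + diag n d ∈ I}

/-- A vertex of (the boundary of) a set: a boundary point through which no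
nontrivial line segment of the boundary passes. -/
def IsVertex (I : Set (Pt n)) (x : Pt n) : Prop :=
  x ∈ frontier I ∧
    ¬ ∃ v : Pt n, v ≠ 0 ∧ ∃ ε > (0:ℝ), ∀ t : ℝ, |t| < ε → x + t • v ∈ frontier I

/-- An axis-aligned (possibly degenerate) rectangle. -/
def IsRect (R : Set (Pt n)) : Prop := ∃ a b : Pt n, a ≤ b ∧ R = Set.Icc a b

/-- A discretely presented interval: a finite union of rectangles. -/
def DiscPresented (I : Set (Pt n)) : Prop :=
  ∃ F : Finset (Set (Pt n)), (∀ R ∈ F, IsRect R) ∧ I = ⋃ R ∈ F, (R : Set (Pt n))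

/-- f is a facet of I orthogonal to direction i: contained in a hyperplane
{y_i = c}, contained in the lower or upper boundary, and (n−1)-dimensional
(contains a full hyperplane patch around one of its points). -/
def IsFacetDir (I : Set (Pt n)) (f : Set (Pt n)) (i : Fin n) : Prop :=
  ∃ c : ℝ, f ⊆ {y | y i = c} ∧ (f ⊆ lowerBd I ∨ f ⊆ upperBd I) ∧
    ∃ z ∈ f, ∃ ε > (0:ℝ), ∀ y : Pt n, y i = c → dist y z < ε → y ∈ f

/-- The set D(x) of the four diagonal boundary distances. -/
def candD (IM IN : Set (Pt n)) (x : Pt n) : Set ℝ≥0∞ :=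
  {dl x (lowerBd IM), dl x (lowerBd IN), dl x (upperBd IM), dl x (upperBd IN)}

/-- The candidate set S. -/
def candS (IM IN : Set (Pt n)) : Set ℝ≥0∞ :=
  {d | ∃ x : Pt n, (IsVertex IM x ∨ IsVertex IN x) ∧
    (d ∈ candD IM IN x ∨ 2 * d ∈ candD IM IN x)}

/-- One-sided limit lim_{ε→0+} f(x − ε v) (junk value if the limit fails to exist). -/
def dlim (f : Pt n → ℤ) (x v : Pt n) : ℤ :=
  limUnder (nhdsWithin (0:ℝ) (Set.Ioi 0)) (fun ε : ℝ => f (x - ε • v))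

/-- The indicator vector Σ_{i ∈ s} e_i. -/
def basisVec (n : ℕ) (s : Finset (Fin n)) : Pt n := fun i => if i ∈ s then 1 else 0

/-- The differential Δf(x) = Σ_k (−1)^k Σ_{|s|=k} lim_{ε→0+} f(x − ε Σ_{i∈s} e_i). -/
def diffl (f : Pt n → ℤ) (x : Pt n) : ℤ :=
  ∑ s : Finset (Fin n), (-1 : ℤ) ^ s.card * dlim f x (basisVec n s)

/-- Right continuity of f : ℝⁿ → ℤ. -/
def RightCont (f : Pt n → ℤ) : Prop :=
  ∀ x : Pt n, Filter.Tendsto f (nhdsWithin x (Set.Ici x)) (nhds (f x))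

/-- A nice function: right continuous, finitely supported differential,
support bounded below. -/
def NiceFn (f : Pt n → ℤ) : Prop :=
  RightCont f ∧ {x | diffl f x ≠ 0}.Finite ∧ ∃ a : ℝ, ∀ x, f x ≠ 0 → ∀ i, a ≤ x i

/-- Positive part Δf₊. -/
def difflp (f : Pt n → ℤ) (x : Pt n) : ℤ := max (diffl f x) 0
/-- Negative part Δf₋. -/
def difflm (f : Pt n → ℤ) (x : Pt n) : ℤ := min (diffl f x) 0

/-- Σ_{y ≤ x} g(y), as a finite sum over the support. -/
def sumLe (g : Pt n → ℤ) (x : Pt n) : ℤ := ∑ᶠ y ∈ {y : Pt n | y ≤ x}, g y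

/-- The δ-extension f^{+δ}(x) = f_{Σ+}(x+δ⃗) + f_{Σ−}(x−δ⃗). -/
def extend (f : Pt n → ℤ) (δ : ℝ) (x : Pt n) : ℤ :=
  sumLe (difflp f) (x + diag n δ) + sumLe (difflm f) (x - diag n δ)

/-- The δ-shrinking f^{−δ}(x) = f_{Σ−}(x+δ⃗) + f_{Σ+}(x−δ⃗). -/
def shrink (f : Pt n → ℤ) (δ : ℝ) (x : Pt n) : ℤ :=
  sumLe (difflm f) (x + diag n δ) + sumLe (difflp f) (x - diag n δ)

/-- d₊(f,g) = inf{δ : f ≤ g^{+δ}, g ≤ f^{+δ}}. -/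
def dplus (f g : Pt n → ℤ) : ℝ≥0∞ :=
  ⨅ (δ : ℝ≥0) (_ : (∀ x, f x ≤ extend g δ x) ∧ (∀ x, g x ≤ extend f δ x)), (δ : ℝ≥0∞)

/-- d₋(f,g) = inf{δ : f ≥ g^{−δ}, g ≥ f^{−δ}}. -/
def dminus (f g : Pt n → ℤ) : ℝ≥0∞ :=
  ⨅ (δ : ℝ≥0) (_ : (∀ x, shrink g δ x ≤ f x) ∧ (∀ x, shrink f δ x ≤ g x)), (δ : ℝ≥0∞)

/-- The dimension distance d₀ = min(d₋, d₊). -/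
def d0 (f g : Pt n → ℤ) : ℝ≥0∞ := min (dminus f g) (dplus f g)

/-- The dimension function dm M(x) = dim M_x (as an integer). -/
def dmFun (M : PersMod n k) : Pt n → ℤ := fun x => (Module.finrank k (M.V x) : ℤ)

/-- A nice persistence module: all structure maps over sufficiently small
diagonal shifts are injective or surjective. -/
def PersMod.Nice (M : PersMod n k) : Prop :=
  ∃ ε₀ > (0:ℝ), ∀ ε : ℝ, ∀ h0 : 0 < ε, ε < ε₀ → ∀ x : Pt n,
    Function.Injective (M.ρ (le_add_diag x h0.le)) ∨
      Function.Surjective (M.ρ (le_add_diag x h0.le))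

/-- Composition ρ_i ∘ ... ∘ ρ₁ of a chain of linear maps. -/
def chainComp {K : Type*} [Field K] (V : ℕ → Type*) [∀ i, AddCommGroup (V i)]
    [∀ i, Module K (V i)] (ρ : ∀ i, V i →ₗ[K] V (i+1)) : ∀ i, V 0 →ₗ[K] V i
  | 0 => LinearMap.id
  | (i+1) => (ρ i).comp (chainComp V ρ i)


section Aux
variable {n : ℕ} {k : Type*} [Field k]

lemma subOf_val_eq_zero {I : Set (Pt n)} {x : Pt n} (hx : x ∉ I)
    (v : ↥(subOf k I x)) : (v : k) = 0 := by
  have h2 := v.2; change _ ∈ (if x ∈ I then _ else _) at h2; rw [if_neg hx] at h2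
  exact (Submodule.mem_bot k).1 h2

/-- cross-interval step map -/
def crossFun (I J : Set (Pt n)) (x y : Pt n) :
    ↥(subOf k I x) →ₗ[k] ↥(subOf k J y) where
  toFun v := ⟨if y ∈ J then (v : k) else 0, by
    by_cases hy : y ∈ J
    · rw [if_pos hy]; show _ ∈ (if y ∈ J then _ else _); rw [if_pos hy]; exact Submodule.mem_top
    · rw [if_neg hy]; exact Submodule.zero_mem _⟩
  map_add' a b := by
    by_cases hy : y ∈ J <;> · apply Subtype.ext; simp [hy]
  map_smul' c a := by
    by_cases hy : y ∈ J <;> · apply Subtype.ext; simp [hy]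

lemma close_pt {I : Set (Pt n)} {x : Pt n} (hx : x ∈ closure I) {δ : ℝ}
    (hδ : 0 < δ) : ∃ z ∈ I, ∀ i, |z i - x i| < δ := by
  obtain ⟨z, hzI, hz⟩ := Metric.mem_closure_iff.mp hx δ hδ
  rcases Nat.eq_zero_or_pos n with hn | hn
  · exact ⟨z, hzI, fun i => absurd (i.2) (by omega)⟩
  · haveI : Nonempty (Fin n) := ⟨⟨0, hn⟩⟩
    refine ⟨z, hzI, fun i => ?_⟩
    have := (dist_pi_lt_iff hδ).mp hz i
    rw [Real.dist_eq, abs_sub_comm] at this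
    exact this

lemma PersMod.rr (M : PersMod n k) {x y z : Pt n} (h1 : x ≤ y) (h2 : y ≤ z)
    (v : M.V x) : M.ρ h2 (M.ρ h1 v) = M.ρ (h1.trans h2) v :=
  (LinearMap.congr_fun (M.ρ_comp h1 h2) v).symm

lemma dI_le {M N : PersMod n k} {δ : ℝ≥0} (h : M.Interleaved N δ) :
    M.dI N ≤ δ := iInf₂_le δ h

lemma interleaved_symm {M N : PersMod n k} {δ : ℝ≥0}
    (h : M.Interleaved N δ) : N.Interleaved M δ := by
  obtain ⟨φ, ψ, s1, s2, t1, t2⟩ := h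
  exact ⟨ψ, φ, s2, s1, t2, t1⟩

end Aux
section Aux2
variable {n : ℕ} {k : Type*} [Field k]

lemma closure_interleaved (I : Set (Pt n)) (hI : IsPInterval I)
    (hIc : IsPInterval (closure I)) (δ : ℝ≥0) (hδ : 0 < δ) :
    (IntervalMod k I hI).Interleaved (IntervalMod k (closure I) hIc) δ := by
  set C := closure I with hC
  have hδR : (0:ℝ) < (δ:ℝ) := hδ
  set D : Pt n := diag n (δ:ℝ) with hD
  -- geometry
  have Gup : ∀ {x y : Pt n}, x ∈ I → x ≤ y → y + D ∈ C → y ∈ I := by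
    intro x y hx hxy hyD
    obtain ⟨z, hzI, hz⟩ := close_pt hyD hδR
    refine hI.2.1 x hx z hzI y hxy (fun i => ?_)
    have h := (abs_lt.mp (hz i)).1
    simp only [Pi.add_apply, hD, diag] at h
    linarith
  have Gdown : ∀ {x : Pt n}, x ∈ C → ∃ z ∈ I, z ≤ x + D := by
    intro x hx
    obtain ⟨z, hzI, hz⟩ := close_pt hx hδR
    refine ⟨z, hzI, fun i => ?_⟩
    have h := (abs_lt.mp (hz i)).2
    simp only [Pi.add_apply, hD, diag] at h ⊢
    linarith
  have G2 : ∀ {x w : Pt n}, x ∈ C → w ∈ I → x + D ≤ w → x + D ∈ I := by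
    intro x w hx hw hle
    obtain ⟨z, hzI, hz⟩ := Gdown hx
    exact hI.2.1 z hzI w hw _ hz hle
  have G3 : ∀ {x : Pt n}, x ∈ C → x + D + D ∈ C → x + D ∈ I := by
    intro x hx hx2
    obtain ⟨z, hzI, hz⟩ := Gdown hx
    obtain ⟨w, hwI, hw⟩ := close_pt hx2 hδR
    refine hI.2.1 z hzI w hwI _ hz (fun i => ?_)
    have h := (abs_lt.mp (hw i)).1
    simp only [Pi.add_apply, hD, diag] at h ⊢
    linarith
  have hconvC : ∀ p ∈ C, ∀ q ∈ C, ∀ r, p ≤ r → r ≤ q → r ∈ C := hIc.2.1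
  have hle1 : ∀ x : Pt n, x ≤ x + D := fun x => le_add_diag x δ.coe_nonneg
  refine ⟨fun x => crossFun I C x (x + D), fun x => crossFun C I x (x + D),
    ?_, ?_, ?_, ?_⟩
  · intro x y h
    apply LinearMap.ext; intro v; apply Subtype.ext
    show (if y + D ∈ C then (if y ∈ I then v.1 else 0) else 0)
      = (if y + D ∈ C then (if x + D ∈ C then v.1 else 0) else 0)
    by_cases h1 : y + D ∈ C
    · by_cases hx : x ∈ I
      · have hyI : y ∈ I := Gup hx h h1
        have hxD : x + D ∈ C := hconvC x (subset_closure hx) (y + D) h1 _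
          (hle1 x) (add_le_add_left h D)
        simp [h1, hyI, hxD]
      · simp [subOf_val_eq_zero hx v]
    · simp [h1]
  · intro x y h
    apply LinearMap.ext; intro v; apply Subtype.ext
    show (if y + D ∈ I then (if y ∈ C then v.1 else 0) else 0)
      = (if y + D ∈ I then (if x + D ∈ I then v.1 else 0) else 0)
    by_cases h1 : y + D ∈ I
    · by_cases hx : x ∈ C
      · have hyC : y ∈ C := hconvC x hx (y + D) (subset_closure h1) y h (hle1 y)
        have hxD : x + D ∈ I := G2 hx h1 (add_le_add_left h D)
        simp [h1, hyC, hxD]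
      · simp [subOf_val_eq_zero hx v]
    · simp [h1]
  · intro x
    apply LinearMap.ext; intro v; apply Subtype.ext
    show (if x + D + D ∈ I then v.1 else 0)
      = (if x + D + D ∈ I then (if x + D ∈ C then v.1 else 0) else 0)
    by_cases h1 : x + D + D ∈ I
    · by_cases hx : x ∈ I
      · have : x + D ∈ I := hI.2.1 x hx _ h1 _ (hle1 x) (hle1 (x + D))
        rw [if_pos h1, if_pos h1, if_pos (subset_closure this : x + D ∈ C)]
      · simp [subOf_val_eq_zero hx v]
    · simp [h1]
  · intro x
    apply LinearMap.ext; intro v; apply Subtype.ext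
    show (if x + D + D ∈ C then v.1 else 0)
      = (if x + D + D ∈ C then (if x + D ∈ I then v.1 else 0) else 0)
    by_cases h1 : x + D + D ∈ C
    · by_cases hx : x ∈ C
      · simp [h1, G3 hx h1]
      · simp [subOf_val_eq_zero hx v]
    · simp [h1]

end Aux2
section Aux3
variable {n : ℕ} {k : Type*} [Field k]

lemma interleaved_comp {M N P : PersMod n k} {δ ε : ℝ≥0}
    (h1 : M.Interleaved N δ) (h2 : N.Interleaved P ε) :
    M.Interleaved P (δ + ε) := by
  obtain ⟨φ1, ψ1, s1, t1, a1, b1⟩ := h1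
  obtain ⟨φ2, ψ2, s2, t2, a2, b2⟩ := h2
  have e : ∀ x : Pt n, x + diag n (δ:ℝ) + diag n (ε:ℝ)
      = x + diag n ((δ + ε : ℝ≥0) : ℝ) := by
    intro x; funext i
    simp only [Pi.add_apply, diag]; push_cast; ring
  have e' : ∀ x : Pt n, x + diag n (ε:ℝ) + diag n (δ:ℝ)
      = x + diag n ((δ + ε : ℝ≥0) : ℝ) := by
    intro x; funext i
    simp only [Pi.add_apply, diag]; push_cast; ring
  refine ⟨fun x => (P.ρ (le_of_eq (e x))).comp
      ((φ2 (x + diag n (δ:ℝ))).comp (φ1 x)),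
    fun x => (M.ρ (le_of_eq (e' x))).comp
      ((ψ1 (x + diag n (ε:ℝ))).comp (ψ2 x)), ?_, ?_, ?_, ?_⟩
  · intro x y h
    apply LinearMap.ext; intro v
    have E1 := LinearMap.congr_fun (s1 h) v
    have E2 := LinearMap.congr_fun
      (s2 (add_le_add_left h (diag n (δ:ℝ)))) (φ1 x v)
    simp only [LinearMap.comp_apply] at E1 E2 ⊢
    rw [E1, E2, P.rr, P.rr]
  · intro x y h
    apply LinearMap.ext; intro v
    have E1 := LinearMap.congr_fun (t2 h) v
    have E2 := LinearMap.congr_fun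
      (t1 (add_le_add_left h (diag n (ε:ℝ)))) (ψ2 x v)
    simp only [LinearMap.comp_apply] at E1 E2 ⊢
    rw [E1, E2, M.rr, M.rr]
  · intro x
    apply LinearMap.ext; intro v
    have E1 := LinearMap.congr_fun (t2 (le_of_eq (e x)))
      (φ2 (x + diag n (δ:ℝ)) (φ1 x v))
    have E2 := (LinearMap.congr_fun (a2 (x + diag n (δ:ℝ))) (φ1 x v)).symm
    have c : x + diag n (δ:ℝ) ≤ x + diag n ((δ + ε : ℝ≥0) : ℝ) + diag n (ε:ℝ) := by
      intro i
      simp only [Pi.add_apply, diag]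
      have := δ.coe_nonneg; have := ε.coe_nonneg
      push_cast; linarith
    have E3 := LinearMap.congr_fun (t1 c) (φ1 x v)
    have E4 := (LinearMap.congr_fun (a1 x) v).symm
    simp only [LinearMap.comp_apply] at E1 E2 E3 E4 ⊢
    rw [E1, E2, N.rr, E3, E4, M.rr, M.rr]
  · intro x
    apply LinearMap.ext; intro v
    have E1 := LinearMap.congr_fun (s1 (le_of_eq (e' x)))
      (ψ1 (x + diag n (ε:ℝ)) (ψ2 x v))
    have E2 := (LinearMap.congr_fun (b1 (x + diag n (ε:ℝ))) (ψ2 x v)).symm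
    have c : x + diag n (ε:ℝ) ≤ x + diag n ((δ + ε : ℝ≥0) : ℝ) + diag n (δ:ℝ) := by
      intro i
      simp only [Pi.add_apply, diag]
      have := δ.coe_nonneg; have := ε.coe_nonneg
      push_cast; linarith
    have E3 := LinearMap.congr_fun (s2 c) (ψ2 x v)
    have E4 := (LinearMap.congr_fun (b2 x) v).symm
    simp only [LinearMap.comp_apply] at E1 E2 E3 E4 ⊢
    rw [E1, E2, N.rr, E3, E4, P.rr, P.rr]

end Aux3
section Aux4
variable {n : ℕ} {k : Type*} [Field k]

lemma dI_le_of_close {M N M' N' : PersMod n k}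
    (hM : ∀ ε : ℝ≥0, 0 < ε → M'.Interleaved M ε)
    (hN : ∀ ε : ℝ≥0, 0 < ε → N.Interleaved N' ε) :
    M'.dI N' ≤ M.dI N := by
  by_cases hA : M.dI N = ⊤
  · simp [hA]
  apply ENNReal.le_of_forall_pos_le_add
  intro ε hε _
  have hε4 : 0 < ε / 4 := by positivity
  have hA2 : M.dI N < M.dI N + ((ε / 2 : ℝ≥0) : ℝ≥0∞) :=
    ENNReal.lt_add_right hA (ENNReal.coe_ne_zero.mpr (by positivity))
  have hA3 : (⨅ (δ : ℝ≥0) (_ : M.Interleaved N δ), (δ : ℝ≥0∞))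
      < M.dI N + ((ε / 2 : ℝ≥0) : ℝ≥0∞) := hA2
  obtain ⟨δ, hδ⟩ := iInf_lt_iff.mp hA3
  obtain ⟨hint, hδlt⟩ := iInf_lt_iff.mp hδ
  have hint' : M'.Interleaved N' ((ε / 4 + δ) + ε / 4) :=
    interleaved_comp (interleaved_comp (hM (ε / 4) hε4) hint) (hN (ε / 4) hε4)
  have hq : (ε / 4 + δ) + ε / 4 = δ + ε / 2 := by
    apply NNReal.coe_injective; push_cast; ring
  rw [hq] at hint'
  have hhalf : (ε : ℝ≥0) / 2 + ε / 2 = ε := by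
    apply NNReal.coe_injective; push_cast; ring
  calc M'.dI N' ≤ ((δ + ε / 2 : ℝ≥0) : ℝ≥0∞) := dI_le hint'
    _ = (δ : ℝ≥0∞) + ((ε / 2 : ℝ≥0) : ℝ≥0∞) := by push_cast; ring
    _ ≤ (M.dI N + ((ε / 2 : ℝ≥0) : ℝ≥0∞)) + ((ε / 2 : ℝ≥0) : ℝ≥0∞) :=
        add_le_add_left hδlt.le _
    _ = M.dI N + (((ε / 2 + ε / 2 : ℝ≥0)) : ℝ≥0∞) := by
        rw [add_assoc, ENNReal.coe_add]
    _ = M.dI N + (ε : ℝ≥0∞) := by rw [hhalf]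

end Aux4

/-- d_I(M, M̄) = 0 for the closure module M̄, and consequently
d_I(M,N) = d_I(M̄, N̄). (The closure of an interval is an interval; this fact is
recorded as the hypotheses `hMc`, `hNc` needed to form the closure modules.) -/
theorem stmt3 {n : ℕ} {k : Type*} [Field k] (IM IN : Set (Pt n))
    (hM : IsPInterval IM) (hN : IsPInterval IN)
    (hMc : IsPInterval (closure IM)) (hNc : IsPInterval (closure IN)) :
    (IntervalMod k IM hM).dI (IntervalMod k (closure IM) hMc) = 0 ∧
    (IntervalMod k IM hM).dI (IntervalMod k IN hN)
      = (IntervalMod k (closure IM) hMc).dI (IntervalMod k (closure IN) hNc) := by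

  constructor
  · refine le_antisymm ?_ zero_le
    apply ENNReal.le_of_forall_pos_le_add
    intro ε hε _
    calc (IntervalMod k IM hM).dI (IntervalMod k (closure IM) hMc)
        ≤ (ε : ℝ≥0∞) := dI_le (closure_interleaved IM hM hMc ε hε)
      _ ≤ 0 + (ε : ℝ≥0∞) := by simp
  · refine le_antisymm ?_ ?_
    · exact dI_le_of_close
        (fun ε hε => closure_interleaved IM hM hMc ε hε)
        (fun ε hε => interleaved_symm (closure_interleaved IN hN hNc ε hε))
    · exact dI_le_of_close
        (fun ε hε => interleaved_symm (closure_interleaved IM hM hMc ε hε))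
        (fun ε hε => closure_interleaved IN hN hNc ε hε)

end
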